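/- Let A : V → W and B : W → V be linear maps of finite-dimensional complex vector spaces. Define B' = Σ_{n≥1} ((2πi)^n / n!) · B(AB)^{n-1} (a finite sum since it can be evaluated via the holomorphic functional calculus / polynomial in AB). Then 1 + A B' = exp(2πi · AB) and 1 + B' A = exp(2πi · BA). -/

import Mathlib

open scoped Real Nat
open Complex

attribute [local instance] Matrix.linftyOpNormedAddCommGroup Matrix.linftyOpNormedRing
  Matrix.linftyOpNormedAlgebra Matrix.linftyOpNormedSpace Matrix.linftyOpIsBoundedSMul

private lemma mat_shift {n m : ℕ} (A : Matrix (Fin m) (Fin n) ℂ) (B : Matrix (Fin n) (Fin m) ℂ) :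
    ∀ k : ℕ, B * (A * B) ^ k = (B * A) ^ k * B := by
  intro k
  induction k with
  | zero => simp
  | succ k ih =>
    rw [pow_succ, pow_succ, ← Matrix.mul_assoc, ih, Matrix.mul_assoc, Matrix.mul_assoc,
      Matrix.mul_assoc]

private lemma exp_smul_eq {p : ℕ} (c : ℂ) (M : Matrix (Fin p) (Fin p) ℂ) :
    NormedSpace.exp (c • M) =
      1 + ∑' k : ℕ, ((c ^ (k + 1) / ((k + 1)! : ℂ)) • M ^ (k + 1)) := by
  have hf : ∀ k : ℕ, ((k ! : ℂ))⁻¹ • (c • M) ^ k = (c ^ k / (k ! : ℂ)) • M ^ k := by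
    intro k
    rw [smul_pow, smul_smul, div_eq_inv_mul]
  have hs : Summable (fun k : ℕ => (c ^ k / (k ! : ℂ)) • M ^ k) := by
    have := NormedSpace.expSeries_summable' (𝕂 := ℂ) (c • M)
    simp only [hf] at this
    exact this
  rw [NormedSpace.exp_eq_tsum (𝕂 := ℂ)]
  simp only [hf]
  rw [Summable.tsum_eq_zero_add hs]
  simp

private noncomputable def lmulCLM {a b p : ℕ} (C : Matrix (Fin a) (Fin b) ℂ) :
    Matrix (Fin b) (Fin p) ℂ →L[ℂ] Matrix (Fin a) (Fin p) ℂ :=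
  LinearMap.toContinuousLinearMap
    { toFun := fun X => C * X
      map_add' := fun x y => Matrix.mul_add C x y
      map_smul' := fun r x => Matrix.mul_smul C r x }

private noncomputable def rmulCLM {a b p : ℕ} (C : Matrix (Fin a) (Fin b) ℂ) :
    Matrix (Fin p) (Fin a) ℂ →L[ℂ] Matrix (Fin p) (Fin b) ℂ :=
  LinearMap.toContinuousLinearMap
    { toFun := fun X => X * C
      map_add' := fun x y => Matrix.add_mul x y C
      map_smul' := fun r x => Matrix.smul_mul r x C }

/-- For complex matrices `A : n × m`, `B : m × n` (linear maps `V → W`, `W → V`),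
with `B' = ∑_{k≥1} ((2πi)^k / k!) • B (A B)^{k-1}`, one has
`1 + A B' = exp(2πi • A B)` and `1 + B' A = exp(2πi • B A)`. -/
theorem stmt_1 (n m : ℕ) (A : Matrix (Fin m) (Fin n) ℂ) (B : Matrix (Fin n) (Fin m) ℂ)
    (B' : Matrix (Fin n) (Fin m) ℂ)
    (hB' : B' = ∑' k : ℕ, (((2 * π * I) ^ (k + 1) / ((k + 1)! : ℂ)) • (B * (A * B) ^ k))) :
    1 + A * B' = NormedSpace.exp ((2 * π * I) • (A * B)) ∧
      1 + B' * A = NormedSpace.exp ((2 * π * I) • (B * A)) := by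
  set c : ℂ := 2 * π * I with hc
  set g : ℕ → Matrix (Fin n) (Fin m) ℂ :=
    fun k => (c ^ (k + 1) / ((k + 1)! : ℂ)) • (B * (A * B) ^ k) with hg
  -- norm bound for the terms of the series
  have hnorm : ∀ k : ℕ, ‖B * (A * B) ^ k‖ ≤ ‖B‖ * ‖A * B‖ ^ k := by
    intro k
    induction k with
    | zero => simp
    | succ k ih =>
      calc ‖B * (A * B) ^ (k + 1)‖ = ‖B * (A * B) ^ k * (A * B)‖ := by
            rw [pow_succ, Matrix.mul_assoc]
        _ ≤ ‖B * (A * B) ^ k‖ * ‖A * B‖ := Matrix.linfty_opNorm_mul _ _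
        _ ≤ ‖B‖ * ‖A * B‖ ^ k * ‖A * B‖ :=
            mul_le_mul_of_nonneg_right ih (norm_nonneg _)
        _ = ‖B‖ * ‖A * B‖ ^ (k + 1) := by ring
  have hsum : Summable g := by
    apply Summable.of_norm
    have hmaj : Summable (fun k : ℕ => (‖c‖ * ‖B‖) * ((‖c‖ * ‖A * B‖) ^ k / k !)) :=
      (Real.summable_pow_div_factorial (‖c‖ * ‖A * B‖)).mul_left _
    refine Summable.of_nonneg_of_le (fun k => norm_nonneg _) (fun k => ?_) hmaj
    have hfac : (k ! : ℝ) ≤ ((k + 1)! : ℝ) :=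
      Nat.cast_le.2 (Nat.factorial_le (Nat.le_succ k))
    have hfacpos : (0 : ℝ) < (k ! : ℝ) := by positivity
    calc ‖g k‖ = ‖c‖ ^ (k + 1) / ((k + 1)! : ℝ) * ‖B * (A * B) ^ k‖ := by
          rw [hg, norm_smul, norm_div, norm_pow, Complex.norm_natCast]
      _ ≤ ‖c‖ ^ (k + 1) / ((k + 1)! : ℝ) * (‖B‖ * ‖A * B‖ ^ k) := by
          gcongr
          exact hnorm k
      _ ≤ ‖c‖ ^ (k + 1) / (k ! : ℝ) * (‖B‖ * ‖A * B‖ ^ k) := by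
          gcongr
      _ = (‖c‖ * ‖B‖) * ((‖c‖ * ‖A * B‖) ^ k / k !) := by
          rw [pow_succ, mul_pow]; ring
  have hAB : A * B' = ∑' k : ℕ, (c ^ (k + 1) / ((k + 1)! : ℂ)) • (A * B) ^ (k + 1) := by
    rw [hB']
    have h1 : A * (∑' k : ℕ, g k) = ∑' k : ℕ, A * g k :=
      (lmulCLM (p := m) A).map_tsum hsum
    rw [h1]
    refine tsum_congr fun k => ?_
    rw [hg, Matrix.mul_smul, ← Matrix.mul_assoc, ← pow_succ']
  have hBA : B' * A = ∑' k : ℕ, (c ^ (k + 1) / ((k + 1)! : ℂ)) • (B * A) ^ (k + 1) := by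
    rw [hB']
    have h1 : (∑' k : ℕ, g k) * A = ∑' k : ℕ, g k * A :=
      (rmulCLM (p := n) A).map_tsum hsum
    rw [h1]
    refine tsum_congr fun k => ?_
    rw [hg, Matrix.smul_mul, mat_shift, Matrix.mul_assoc, ← pow_succ]
  exact ⟨by rw [hAB, exp_smul_eq], by rw [hBA, exp_smul_eq]⟩
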